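/- For all integers n ≥ 4 and n₀ with 1 ≤ n₀ ≤ n/4, there exist an integer M and vectors w^{(1)}, …, w^{(M)} ∈ {0,1}^n such that: (i) ‖w^{(i)}‖₀ = n₀ for all 1 ≤ i ≤ M; (ii) d_H(w^{(i)}, w^{(j)}) ≥ n₀/2 for all 1 ≤ i ≠ j ≤ M; and (iii) log M ≥ 0.233 · n₀ · log(n/n₀). -/

import Mathlib

open Finset

section helpers
set_option exponentiation.threshold 2000
set_option maxRecDepth 20000

lemma numA : (233:ℝ) * Real.log 5 + 250 * Real.log 3 ≤ 1000 * Real.log 2 := by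
  have h : ((5:ℝ)^(233:ℕ) * 3^(250:ℕ)) ≤ (2:ℝ)^(1000:ℕ) := by
    have h' : (5:ℕ)^233 * 3^250 ≤ 2^1000 := by norm_num
    have := (Nat.cast_le (α := ℝ)).2 h'
    push_cast at this
    convert this using 2 <;> norm_num <;> rfl
  have h2 := Real.log_le_log (by positivity) h
  rw [Real.log_mul (by positivity) (by positivity), Real.log_pow, Real.log_pow, Real.log_pow] at h2
  push_cast at h2
  linarith

lemma numB : (233:ℝ) * Real.log 6 + 1000 * Real.log 2 ≤ 750 * Real.log 5 := by
  have h : ((6:ℝ)^(233:ℕ) * 2^(1000:ℕ)) ≤ (5:ℝ)^(750:ℕ) := by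
    have h' : (6:ℕ)^233 * 2^1000 ≤ 5^750 := by norm_num
    have := (Nat.cast_le (α := ℝ)).2 h'
    push_cast at this
    convert this using 2 <;> norm_num <;> rfl
  have h2 := Real.log_le_log (by positivity) h
  rw [Real.log_mul (by positivity) (by positivity), Real.log_pow, Real.log_pow, Real.log_pow] at h2
  push_cast at h2
  linarith

lemma numMain (m : ℕ) (hm : 4 ≤ m) :
    932 * Real.log ((m:ℝ)+1) + 4000 * Real.log 2 + 1000 * Real.log ((m:ℝ)-1)
      ≤ 4000 * Real.log (m:ℝ) := by
  rcases eq_or_lt_of_le hm with h4 | h5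
  · subst h4
    norm_num
    have : Real.log 4 = 2 * Real.log 2 := by
      rw [show (4:ℝ) = 2^2 by norm_num, Real.log_pow]; push_cast; ring
    nlinarith [numA]
  · have hm5 : (5:ℝ) ≤ (m:ℝ) := by exact_mod_cast h5
    have h1 : Real.log ((m:ℝ)+1) ≤ Real.log 6 + Real.log (m:ℝ) - Real.log 5 := by
      have hle : ((m:ℝ)+1) ≤ 6/5 * m := by linarith
      have h2 := Real.log_le_log (by linarith) hle
      rw [Real.log_mul (by norm_num) (by linarith),
        Real.log_div (by norm_num) (by norm_num)] at h2
      linarith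
    have h2 : Real.log ((m:ℝ)-1) ≤ Real.log (m:ℝ) :=
      Real.log_le_log (by linarith) (by linarith)
    have h3 : Real.log 5 ≤ Real.log (m:ℝ) := Real.log_le_log (by norm_num) hm5
    nlinarith [numB]

lemma delta_self {n₀ m : ℕ} (f : Fin n₀ → Fin m) :
    (univ.filter fun i => f i ≠ f i).card = 0 := by simp

lemma delta_comm {n₀ m : ℕ} (f g : Fin n₀ → Fin m) :
    (univ.filter fun i => f i ≠ g i) = (univ.filter fun i => g i ≠ f i) := by
  ext i; simp [ne_comm]

lemma fiber_bound (m n₀ : ℕ) (hm : 2 ≤ m) (g : Fin n₀ → Fin m) (s : Finset (Fin n₀)) :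
    (univ.filter fun f : Fin n₀ → Fin m =>
        (univ.filter fun i => f i ≠ g i) = s).card ≤ (m-1)^(s.card) := by
  classical
  haveI : Nontrivial (Fin m) := Fin.nontrivial_iff_two_le.mpr hm
  have hcard : Fintype.card (∀ i : s, {x : Fin m // x ≠ g i.1}) = (m-1)^(s.card) := by
    rw [Fintype.card_pi]
    have h1 : ∀ i : s, Fintype.card {x : Fin m // x ≠ g i.1} = m - 1 := by
      intro i
      have := Fintype.card_subtype_compl (fun x : Fin m => x = g i.1)
      simpa [Fintype.card_subtype_eq, Fintype.card_fin] using this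
    rw [Finset.prod_congr rfl (fun i _ => h1 i)]
    simp [Finset.prod_const, Finset.card_univ]
  rw [← hcard, ← Finset.card_univ]
  apply Finset.card_le_card_of_injOn
    (f := fun f (i : s) => if h : f i.1 = g i.1 then
        (⟨(exists_ne (g i.1)).choose, (exists_ne (g i.1)).choose_spec⟩ : {x : Fin m // x ≠ g i.1})
      else ⟨f i.1, h⟩)
  · intro f _; exact mem_univ _
  · intro f₁ hf₁ f₂ hf₂ heq
    simp only [coe_filter, Set.mem_setOf_eq, mem_univ, true_and] at hf₁ hf₂
    funext i
    by_cases hi : i ∈ s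
    · have h1 : f₁ i ≠ g i := by
        have := hf₁ ▸ hi; simpa using (mem_filter.1 this).2
      have h2 : f₂ i ≠ g i := by
        have := hf₂ ▸ hi; simpa using (mem_filter.1 this).2
      have := congrFun heq ⟨i, hi⟩
      simp only [dif_neg h1, dif_neg h2, Subtype.mk.injEq] at this
      exact this
    · have h1 : f₁ i = g i := by
        by_contra hc
        exact hi (hf₁ ▸ (mem_filter.2 ⟨mem_univ _, hc⟩))
      have h2 : f₂ i = g i := by
        by_contra hc
        exact hi (hf₂ ▸ (mem_filter.2 ⟨mem_univ _, hc⟩))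
      rw [h1, h2]

lemma ball_bound (m n₀ K : ℕ) (hm : 2 ≤ m) (g : Fin n₀ → Fin m) :
    (univ.filter fun f : Fin n₀ → Fin m =>
        (univ.filter fun i => f i ≠ g i).card ≤ K).card ≤ 2^n₀ * (m-1)^K := by
  classical
  set P := (univ.powerset.filter fun s : Finset (Fin n₀) => s.card ≤ K) with hP
  have cover : (univ.filter fun f : Fin n₀ → Fin m =>
      (univ.filter fun i => f i ≠ g i).card ≤ K)
      ⊆ P.biUnion (fun s => univ.filter fun f => (univ.filter fun i => f i ≠ g i) = s) := by
    intro f hf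
    simp only [mem_filter, mem_univ, true_and] at hf
    refine mem_biUnion.2 ⟨univ.filter fun i => f i ≠ g i, ?_, ?_⟩
    · rw [hP]; exact mem_filter.2 ⟨mem_powerset.2 (subset_univ _), hf⟩
    · simp
  calc (univ.filter fun f : Fin n₀ → Fin m =>
      (univ.filter fun i => f i ≠ g i).card ≤ K).card
      ≤ (P.biUnion (fun s => univ.filter fun f : Fin n₀ → Fin m =>
          (univ.filter fun i => f i ≠ g i) = s)).card := card_le_card cover
    _ ≤ ∑ s ∈ P, (univ.filter fun f : Fin n₀ → Fin m =>
          (univ.filter fun i => f i ≠ g i) = s).card := card_biUnion_le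
    _ ≤ ∑ s ∈ P, (m-1)^K := by
        refine Finset.sum_le_sum fun s hs => ?_
        have hs' : s.card ≤ K := (mem_filter.1 hs).2
        exact (fiber_bound m n₀ hm g s).trans (Nat.pow_le_pow_right (by omega) hs')
    _ = P.card * (m-1)^K := by rw [Finset.sum_const, smul_eq_mul]
    _ ≤ 2^n₀ * (m-1)^K := by
        have h1 : P.card ≤ (univ.powerset : Finset (Finset (Fin n₀))).card :=
          card_le_card (filter_subset _ _)
        have h2 : (univ.powerset : Finset (Finset (Fin n₀))).card = 2^n₀ := by
          simp [card_powerset, card_univ]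
        exact Nat.mul_le_mul_right _ (h2 ▸ h1)

lemma exists_code (m n₀ K : ℕ) :
    ∃ C : Finset (Fin n₀ → Fin m),
      (∀ f ∈ C, ∀ g ∈ C, f ≠ g → K < (univ.filter fun i => f i ≠ g i).card) ∧
      (∀ f : Fin n₀ → Fin m, ∃ g ∈ C, (univ.filter fun i => f i ≠ g i).card ≤ K) := by
  classical
  have hne : (univ.powerset.filter fun C : Finset (Fin n₀ → Fin m) =>
      ∀ f ∈ C, ∀ g ∈ C, f ≠ g → K < (univ.filter fun i => f i ≠ g i).card).Nonempty :=
    ⟨∅, by simp⟩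
  obtain ⟨C, hC, hmax⟩ := Finset.exists_max_image _ Finset.card hne
  have hCgood := (mem_filter.1 hC).2
  refine ⟨C, hCgood, ?_⟩
  intro f
  by_contra hcon
  push_neg at hcon
  have hfC : f ∉ C := by
    intro hf
    have := hcon f hf
    simp [delta_self] at this
  have hins : ∀ a ∈ insert f C, ∀ b ∈ insert f C, a ≠ b →
      K < (univ.filter fun i => a i ≠ b i).card := by
    intro a ha b hb hab
    rcases mem_insert.1 ha with rfl | ha' <;> rcases mem_insert.1 hb with rfl | hb'
    · exact absurd rfl hab
    · exact hcon b hb'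
    · rw [delta_comm]; exact hcon a ha'
    · exact hCgood a ha' b hb' hab
  have hle := hmax (insert f C) (mem_filter.2 ⟨mem_powerset.2 (subset_univ _), hins⟩)
  rw [card_insert_of_notMem hfC] at hle
  omega

end helpers


/-- sparse Varshamov–Gilbert bound.  For `n ≥ 4` and `1 ≤ n₀ ≤ n/4` there
exist `M` binary vectors in `{0,1}^n`, each of sparsity exactly `n₀`, with pairwise Hamming
distance at least `n₀/2`, and `log M ≥ 0.233·n₀·log(n/n₀)`. -/
theorem stmt_14 (n n₀ : ℕ) (hn : 4 ≤ n) (h1 : 1 ≤ n₀) (h2 : 4 * n₀ ≤ n) :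
    ∃ (M : ℕ) (w : Fin M → Fin n → Bool),
      (∀ i, (Finset.univ.filter fun k => w i k = true).card = n₀) ∧
      (∀ i j, i ≠ j →
        (n₀ : ℝ) / 2 ≤ ((Finset.univ.filter fun k => w i k ≠ w j k).card : ℝ)) ∧
      0.233 * (n₀ : ℝ) * Real.log ((n : ℝ) / (n₀ : ℝ)) ≤ Real.log (M : ℝ) := by
  classical
  set m := n / n₀ with hm_def
  have hn₀pos : 0 < n₀ := h1
  have hm4 : 4 ≤ m := (Nat.le_div_iff_mul_le hn₀pos).2 h2
  set K := (n₀ - 1) / 4 with hK_def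
  obtain ⟨C, hCd, hCcov⟩ := exists_code m n₀ K
  -- counting bound
  have hcount : m ^ n₀ ≤ C.card * (2^n₀ * (m-1)^K) := by
    have hsub : (univ : Finset (Fin n₀ → Fin m)) ⊆ C.biUnion
        (fun g => univ.filter fun f => (univ.filter fun i => f i ≠ g i).card ≤ K) := by
      intro f _
      obtain ⟨g, hg, hd⟩ := hCcov f
      exact mem_biUnion.2 ⟨g, hg, mem_filter.2 ⟨mem_univ _, hd⟩⟩
    calc m ^ n₀ = (univ : Finset (Fin n₀ → Fin m)).card := by
          simp [card_univ]
      _ ≤ (C.biUnion (fun g => univ.filter fun f : Fin n₀ → Fin m =>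
            (univ.filter fun i => f i ≠ g i).card ≤ K)).card := card_le_card hsub
      _ ≤ ∑ g ∈ C, (univ.filter fun f : Fin n₀ → Fin m =>
            (univ.filter fun i => f i ≠ g i).card ≤ K).card := card_biUnion_le
      _ ≤ ∑ _g ∈ C, 2^n₀*(m-1)^K :=
          Finset.sum_le_sum fun g _ => ball_bound m n₀ K (by omega) g
      _ = C.card * (2^n₀ * (m-1)^K) := by rw [Finset.sum_const, smul_eq_mul]
  have hMpos : 0 < C.card := by
    by_contra hc
    push_neg at hc
    interval_cases h : C.card
    · simp at hcount
      have : 0 < m ^ n₀ := pow_pos (by omega) _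
      omega
  set M := C.card with hM_def
  -- enumeration
  set e : Fin M → C := fun i => C.equivFin.symm i with he_def
  -- geometry of the embedding
  have hlt : ∀ (f : Fin n₀ → Fin m) (j : Fin n₀), (j:ℕ) * m + (f j : ℕ) < n := by
    intro f j
    have hfj := (f j).2
    have hj := j.2
    have h1' : ((j:ℕ)+1) * m ≤ n₀ * m := Nat.mul_le_mul_right _ (by omega)
    have h3 : m * n₀ ≤ n := Nat.div_mul_le_self n n₀
    have h4 : ((j:ℕ)+1)*m = (j:ℕ)*m + m := by ring
    have h5 : m * n₀ = n₀ * m := Nat.mul_comm _ _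
    omega
  have huniq : ∀ (a b : Fin n₀) (x y : Fin m),
      (a:ℕ)*m + (x:ℕ) = (b:ℕ)*m + (y:ℕ) → a = b ∧ (x:ℕ) = (y:ℕ) := by
    intro a b x y h
    have hx := x.2
    have hy := y.2
    have hmpos : 0 < m := by omega
    have ha : ((a:ℕ)*m + (x:ℕ)) / m = a := by
      rw [mul_comm, Nat.mul_add_div hmpos, Nat.div_eq_of_lt hx, add_zero]
    have hb : ((b:ℕ)*m + (y:ℕ)) / m = b := by
      rw [mul_comm, Nat.mul_add_div hmpos, Nat.div_eq_of_lt hy, add_zero]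
    have hab : (a:ℕ) = b := by rw [← ha, ← hb, h]
    rw [hab] at h
    exact ⟨Fin.ext hab, by omega⟩
  set ψ : (Fin n₀ → Fin m) → Fin n₀ → Fin n :=
    fun f j => ⟨(j:ℕ)*m + (f j : ℕ), hlt f j⟩ with hψ_def
  have hψinj : ∀ f, Function.Injective (ψ f) := by
    intro f a b hab
    have := Fin.val_eq_of_eq hab
    exact (huniq a b (f a) (f b) this).1
  -- the witnesses
  refine ⟨M, fun i k => decide (∃ j : Fin n₀, (k:ℕ) = (j:ℕ) * m + ((e i).1 j : ℕ)), ?_, ?_, ?_⟩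
  · -- sparsity
    intro i
    have hfe : (univ.filter fun k : Fin n =>
        (decide (∃ j : Fin n₀, (k:ℕ) = (j:ℕ) * m + ((e i).1 j : ℕ))) = true)
        = univ.image (ψ ((e i).1)) := by
      ext k
      simp only [mem_filter, mem_univ, true_and, mem_image, decide_eq_true_eq]
      constructor
      · rintro ⟨j, hj⟩
        exact ⟨j, Fin.ext (by simp [hψ_def, hj.symm])⟩
      · rintro ⟨j, rfl⟩
        exact ⟨j, by simp [hψ_def]⟩
    rw [hfe, Finset.card_image_of_injective _ (hψinj _), card_univ, Fintype.card_fin]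
  · -- distance
    intro i j hij
    set f := (e i).1 with hf_def
    set g := (e j).1 with hg_def
    have hfg : f ≠ g := by
      intro h
      exact hij (C.equivFin.symm.injective (Subtype.ext h))
    have hδ : K < (univ.filter fun i' => f i' ≠ g i').card :=
      hCd f (e i).2 g (e j).2 hfg
    set δ := (univ.filter fun i' => f i' ≠ g i').card with hδ_def
    have hn₀4δ : n₀ ≤ 4 * δ := by omega
    set D := (univ.filter fun i' => f i' ≠ g i') with hD_def
    -- two disjoint image sets inside the disagreement set
    have hmemA : ∀ a ∈ D, ψ f a ∈ (univ.filter fun k : Fin n =>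
        (decide (∃ j' : Fin n₀, (k:ℕ) = (j':ℕ) * m + (f j' : ℕ)))
          ≠ (decide (∃ j' : Fin n₀, (k:ℕ) = (j':ℕ) * m + (g j' : ℕ)))) := by
      intro a ha
      have hane : f a ≠ g a := by
        rw [hD_def] at ha; exact (mem_filter.1 ha).2
      refine mem_filter.2 ⟨mem_univ _, ?_⟩
      have ht : (decide (∃ j' : Fin n₀, ((ψ f a : Fin n):ℕ) = (j':ℕ) * m + (f j' : ℕ))) = true := by
        simp only [decide_eq_true_eq]
        exact ⟨a, by simp [hψ_def]⟩
      have hfalse : (decide (∃ j' : Fin n₀, ((ψ f a : Fin n):ℕ) = (j':ℕ) * m + (g j' : ℕ))) = false := by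
        simp only [decide_eq_false_iff_not]
        rintro ⟨j', hj'⟩
        have : ((a:ℕ)*m + (f a : ℕ)) = (j':ℕ)*m + (g j' : ℕ) := by
          simpa [hψ_def] using hj'
        obtain ⟨haj, hval⟩ := huniq a j' (f a) (g j') this
        subst haj
        exact hane (Fin.ext hval)
      rw [ht, hfalse]
      simp
    have hmemB : ∀ a ∈ D, ψ g a ∈ (univ.filter fun k : Fin n =>
        (decide (∃ j' : Fin n₀, (k:ℕ) = (j':ℕ) * m + (f j' : ℕ)))
          ≠ (decide (∃ j' : Fin n₀, (k:ℕ) = (j':ℕ) * m + (g j' : ℕ)))) := by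
      intro a ha
      have hane : f a ≠ g a := by
        rw [hD_def] at ha; exact (mem_filter.1 ha).2
      refine mem_filter.2 ⟨mem_univ _, ?_⟩
      have ht : (decide (∃ j' : Fin n₀, ((ψ g a : Fin n):ℕ) = (j':ℕ) * m + (g j' : ℕ))) = true := by
        simp only [decide_eq_true_eq]
        exact ⟨a, by simp [hψ_def]⟩
      have hfalse : (decide (∃ j' : Fin n₀, ((ψ g a : Fin n):ℕ) = (j':ℕ) * m + (f j' : ℕ))) = false := by
        simp only [decide_eq_false_iff_not]
        rintro ⟨j', hj'⟩
        have : ((a:ℕ)*m + (g a : ℕ)) = (j':ℕ)*m + (f j' : ℕ) := by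
          simpa [hψ_def] using hj'
        obtain ⟨haj, hval⟩ := huniq a j' (g a) (f j') this
        subst haj
        exact hane (Fin.ext hval.symm)
      rw [ht, hfalse]
      simp
    have hdisj : Disjoint (D.image (ψ f)) (D.image (ψ g)) := by
      rw [Finset.disjoint_left]
      intro k hkA hkB
      obtain ⟨a, ha, hka⟩ := mem_image.1 hkA
      obtain ⟨b, hb, hkb⟩ := mem_image.1 hkB
      have : ((a:ℕ)*m + (f a : ℕ)) = ((b:ℕ)*m + (g b : ℕ)) := by
        have := hka.trans hkb.symm
        simpa [hψ_def] using Fin.val_eq_of_eq this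
      obtain ⟨hab, hval⟩ := huniq a b (f a) (g b) this
      subst hab
      have : f a ≠ g a := by rw [hD_def] at ha; exact (mem_filter.1 ha).2
      exact this (Fin.ext hval)
    have hsubset : (D.image (ψ f)) ∪ (D.image (ψ g)) ⊆
        (univ.filter fun k : Fin n =>
          (decide (∃ j' : Fin n₀, (k:ℕ) = (j':ℕ) * m + (f j' : ℕ)))
            ≠ (decide (∃ j' : Fin n₀, (k:ℕ) = (j':ℕ) * m + (g j' : ℕ)))) := by
      intro k hk
      rcases mem_union.1 hk with hk' | hk'
      · obtain ⟨a, ha, rfl⟩ := mem_image.1 hk'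
        exact hmemA a ha
      · obtain ⟨a, ha, rfl⟩ := mem_image.1 hk'
        exact hmemB a ha
    have hcard2 : 2 * δ ≤ (univ.filter fun k : Fin n =>
          (decide (∃ j' : Fin n₀, (k:ℕ) = (j':ℕ) * m + (f j' : ℕ)))
            ≠ (decide (∃ j' : Fin n₀, (k:ℕ) = (j':ℕ) * m + (g j' : ℕ)))).card := by
      have := card_le_card hsubset
      rw [card_union_of_disjoint hdisj,
        Finset.card_image_of_injective _ (hψinj f),
        Finset.card_image_of_injective _ (hψinj g)] at this
      omega
    have : (n₀:ℝ) ≤ 2 * ((univ.filter fun k : Fin n =>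
          (decide (∃ j' : Fin n₀, (k:ℕ) = (j':ℕ) * m + (f j' : ℕ)))
            ≠ (decide (∃ j' : Fin n₀, (k:ℕ) = (j':ℕ) * m + (g j' : ℕ)))).card : ℝ) := by
      have hnat : n₀ ≤ 2 * (univ.filter fun k : Fin n =>
          (decide (∃ j' : Fin n₀, (k:ℕ) = (j':ℕ) * m + (f j' : ℕ)))
            ≠ (decide (∃ j' : Fin n₀, (k:ℕ) = (j':ℕ) * m + (g j' : ℕ)))).card := by omega
      exact_mod_cast hnat
    linarith
  · -- log bound
    have hm1 : (1:ℕ) ≤ m - 1 := by omega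
    have hcast : ((m:ℝ)) ^ n₀ ≤ (M:ℝ) * (2^n₀ * ((m:ℝ)-1)^K) := by
      have := (Nat.cast_le (α := ℝ)).2 hcount
      push_cast [Nat.cast_sub (by omega : 1 ≤ m)] at this
      convert this using 2 <;> norm_num
    have hMr : (1:ℝ) ≤ (M:ℝ) := by exact_mod_cast hMpos
    have hmr : (4:ℝ) ≤ (m:ℝ) := by exact_mod_cast hm4
    have hlog1 : (n₀:ℝ) * Real.log m ≤ Real.log M + n₀ * Real.log 2 + K * Real.log ((m:ℝ)-1) := by
      have hpos1 : (0:ℝ) < (M:ℝ) := by linarith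
      have hpos2 : (0:ℝ) < (2:ℝ)^n₀ := by positivity
      have hm1r : (0:ℝ) < (m:ℝ)-1 := by linarith
      have hpos3 : (0:ℝ) < ((m:ℝ)-1)^K := pow_pos hm1r K
      have h := Real.log_le_log (by positivity) hcast
      rw [Real.log_pow, Real.log_mul (ne_of_gt hpos1) (by positivity),
        Real.log_mul (ne_of_gt hpos2) (ne_of_gt hpos3), Real.log_pow, Real.log_pow] at h
      push_cast at h
      linarith
    have hKn : (4:ℝ) * (K:ℝ) ≤ (n₀:ℝ) := by
      have : 4 * K ≤ n₀ := by omega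
      exact_mod_cast this
    have hlogm1 : (0:ℝ) ≤ Real.log ((m:ℝ)-1) := Real.log_nonneg (by linarith)
    have hnn₀ : (n:ℝ) / (n₀:ℝ) ≤ (m:ℝ) + 1 := by
      have hlt' : n % n₀ < n₀ := Nat.mod_lt _ hn₀pos
      have : n < n₀ * (m + 1) := by
        have hEq : n₀ * m + n % n₀ = n := by rw [hm_def]; exact Nat.div_add_mod n n₀
        have hEq2 : n₀ * (m + 1) = n₀ * m + n₀ := by ring
        omega
      have hr : (n:ℝ) < (n₀:ℝ) * ((m:ℝ) + 1) := by exact_mod_cast this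
      rw [div_le_iff₀ (by exact_mod_cast hn₀pos)]
      linarith
    have hlog2 : Real.log ((n:ℝ)/(n₀:ℝ)) ≤ Real.log ((m:ℝ)+1) := by
      apply Real.log_le_log ?_ hnn₀
      apply div_pos (by exact_mod_cast (by omega : 0 < n)) (by exact_mod_cast hn₀pos)
    have hnum := numMain m hm4
    have hn₀r : (1:ℝ) ≤ (n₀:ℝ) := by exact_mod_cast h1
    have hmul := mul_le_mul_of_nonneg_left hnum (show (0:ℝ) ≤ (n₀:ℝ)/4000 by linarith)
    have hlogm1' : (K:ℝ) * Real.log ((m:ℝ)-1) ≤ ((n₀:ℝ)/4) * Real.log ((m:ℝ)-1) := by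
      apply mul_le_mul_of_nonneg_right ?_ hlogm1
      linarith
    have hstep : 0.233 * (n₀:ℝ) * Real.log ((m:ℝ)+1) ≤ Real.log (M:ℝ) := by
      nlinarith [hmul, hlog1, hlogm1']
    have hfinal : 0.233 * (n₀:ℝ) * Real.log ((n:ℝ)/(n₀:ℝ)) ≤ 0.233 * (n₀:ℝ) * Real.log ((m:ℝ)+1) := by
      apply mul_le_mul_of_nonneg_left hlog2
      positivity
    linarith
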